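/- Let n ≥ 1 and p ≥ 1. Let Ω_I, Ω_O ⊆ S^n be nonempty compact sets, each equipped with the geodesic distance d_{S^n}(x,y) = arccos(x·y). Let μ_I be a finite Borel measure on Ω_I of total mass M; let x₁, …, x_N ∈ Ω_I have Euclidean covering radius r = sup_{x ∈ Ω_I} min_j |x − x_j| with r ≤ 2, and let μ_I^N be the pushforward of μ_I under a Borel nearest-point map onto {x₁,…,x_N}. Let Ω ⊂ ℝ^n be a nonempty compact set, μ_t a finite Borel measure on Ω of total mass M; let z₁, …, z_K ∈ Ω have covering radius l = sup_{z ∈ Ω} min_i |z − z_i|, and let μ_t^K be the pushforward of μ_t under a Borel nearest-point map onto {z₁,…,z_K}. Let Q : Ω_O → Ω be a homeomorphism that is Lipschitz with constant L_Q (from d_{S^n} to the Euclidean distance on ℝ^n) and whose inverse Q⁻¹ is Lipschitz with constant C₁ (from the Euclidean distance on Ω to the Euclidean distance on ℝ^{n+1}), and assume C₁·l ≤ 2; set μ_O = (Q⁻¹)♯μ_t and μ_O^K = (Q⁻¹)♯μ_t^K. Let T̃ : Ω_I → Ω_O be a Borel map that is Lipschitz with constant L_T with respect to the geodesic distances, and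 suppose W_p(T̃♯μ_I^N, μ_O^K) ≤ δ (Wasserstein with respect to d_{S^n} on Ω_O). Then W_p((Q ∘ T̃)♯μ_I, μ_t) ≤ L_Q · ( L_T · M^{1/p} p^{−1/p} arccos(1 − r²/2) + δ + M^{1/p} p^{−1/p} arccos(1 − (C₁ l)²/2) ), where the left-hand Wasserstein distance is with respect to the Euclidean distance on ℝ^n. -/

import Mathlib

open MeasureTheory
open scoped ENNReal RealInnerProductSpace

/-- The optimal transport cost between two measures, for a cost `c`, as the infimum of
`∫ c dγ` over all couplings `γ` of the two measures. -/
noncomputable def OTCost {X : Type*} [MeasurableSpace X]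
    (c : X → X → ℝ≥0∞) (μ ν : Measure X) : ℝ≥0∞ :=
  ⨅ γ ∈ {γ : Measure (X × X) | γ.map Prod.fst = μ ∧ γ.map Prod.snd = ν},
    ∫⁻ q, c q.1 q.2 ∂γ

/-- Wasserstein distance of order `p` with cost `(1/p) d(x,y)^p`. -/
noncomputable def Wp {X : Type*} [MeasurableSpace X] (d : X → X → ℝ) (p : ℝ)
    (μ ν : Measure X) : ℝ≥0∞ :=
  OTCost (fun x y => ENNReal.ofReal (1 / p * d x y ^ p)) μ ν ^ (1 / p)


open ProbabilityTheory
set_option maxHeartbeats 1000000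

section Aux

lemma arccos_antitone : Antitone Real.arccos := fun x y h => by
  simp only [Real.arccos]
  have := Real.monotone_arcsin h
  linarith

lemma inner_eq_one_sub_dist {E : Type*} [NormedAddCommGroup E] [InnerProductSpace ℝ E]
    {a b : E} (ha : ‖a‖ = 1) (hb : ‖b‖ = 1) : ⟪a, b⟫ = 1 - dist a b ^ 2 / 2 := by
  have h := @norm_sub_sq_real E _ _ a b
  rw [dist_eq_norm]
  rw [ha, hb] at h
  nlinarith [h]

lemma arccos_inner_le_of_dist_le {E : Type*} [NormedAddCommGroup E] [InnerProductSpace ℝ E]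
    {a b : E} (ha : ‖a‖ = 1) (hb : ‖b‖ = 1) {s : ℝ} (hs : dist a b ≤ s) :
    Real.arccos ⟪a, b⟫ ≤ Real.arccos (1 - s ^ 2 / 2) := by
  apply arccos_antitone
  rw [inner_eq_one_sub_dist ha hb]
  nlinarith [dist_nonneg (x := a) (y := b)]

lemma arccos_inner_triangle {E : Type*} [NormedAddCommGroup E] [InnerProductSpace ℝ E]
    {a b c : E} (ha : ‖a‖ = 1) (hb : ‖b‖ = 1) (hc : ‖c‖ = 1) :
    Real.arccos ⟪a, c⟫ ≤ Real.arccos ⟪a, b⟫ + Real.arccos ⟪b, c⟫ := by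
  set α := Real.arccos ⟪a, b⟫ with hα
  set β := Real.arccos ⟪b, c⟫ with hβ
  by_cases hπ : Real.pi ≤ α + β
  · exact (Real.arccos_le_pi _).trans hπ
  push_neg at hπ
  have hab : |⟪a, b⟫| ≤ 1 := by simpa [ha, hb] using abs_real_inner_le_norm a b
  have hbc : |⟪b, c⟫| ≤ 1 := by simpa [hb, hc] using abs_real_inner_le_norm b c
  have hab1 := abs_le.mp hab
  have hbc1 := abs_le.mp hbc
  have hbb : ⟪b, b⟫ = 1 := by
    rw [real_inner_self_eq_norm_mul_norm, hb]; norm_num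
  set a' := a - ⟪a, b⟫ • b with ha'
  set c' := c - ⟪c, b⟫ • b with hc'
  have h1 : ⟪a', c'⟫ = ⟪a, c⟫ - ⟪a, b⟫ * ⟪b, c⟫ := by
    simp only [ha', hc', inner_sub_left, inner_sub_right, real_inner_smul_left,
      real_inner_smul_right, hbb, real_inner_comm b c]
    ring
  have h2 : ‖a'‖ ^ 2 = 1 - ⟪a, b⟫ ^ 2 := by
    rw [← real_inner_self_eq_norm_sq]
    simp only [ha', inner_sub_left, inner_sub_right, real_inner_smul_left,
      real_inner_smul_right, hbb, real_inner_comm b a]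
    have : ⟪a, a⟫ = 1 := by rw [real_inner_self_eq_norm_mul_norm, ha]; norm_num
    rw [this]; ring
  have h3 : ‖c'‖ ^ 2 = 1 - ⟪c, b⟫ ^ 2 := by
    rw [← real_inner_self_eq_norm_sq]
    simp only [hc', inner_sub_left, inner_sub_right, real_inner_smul_left,
      real_inner_smul_right, hbb, real_inner_comm b c]
    have : ⟪c, c⟫ = 1 := by rw [real_inner_self_eq_norm_mul_norm, hc]; norm_num
    rw [real_inner_comm c b, this]; ring
  have h4 : ‖a'‖ = Real.sqrt (1 - ⟪a, b⟫ ^ 2) := by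
    rw [← h2, Real.sqrt_sq (norm_nonneg _)]
  have h5 : ‖c'‖ = Real.sqrt (1 - ⟪b, c⟫ ^ 2) := by
    rw [← real_inner_comm c b] at h3
    rw [← h3, Real.sqrt_sq (norm_nonneg _)]
  have hCS : -(‖a'‖ * ‖c'‖) ≤ ⟪a', c'⟫ := by
    have h := abs_le.mp (abs_real_inner_le_norm a' c')
    linarith [h.1]
  have key : Real.cos (α + β) ≤ ⟪a, c⟫ := by
    rw [Real.cos_add, hα, hβ, Real.cos_arccos hab1.1 hab1.2, Real.cos_arccos hbc1.1 hbc1.2,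
      Real.sin_arccos, Real.sin_arccos]
    rw [h4, h5] at hCS
    rw [h1] at hCS
    linarith
  calc Real.arccos ⟪a, c⟫ ≤ Real.arccos (Real.cos (α + β)) := arccos_antitone key
    _ = α + β := Real.arccos_cos
        (by have := Real.arccos_nonneg (⟪a, b⟫); have := Real.arccos_nonneg (⟪b, c⟫)
            rw [hα, hβ]; positivity) hπ.le

lemma measure_ext_of_lintegral {α : Type*} [MeasurableSpace α] (μ ν : MeasureTheory.Measure α)
    (h : ∀ f : α → ℝ≥0∞, Measurable f → ∫⁻ x, f x ∂μ = ∫⁻ x, f x ∂ν) : μ = ν :=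
  MeasureTheory.Measure.ext fun s hs => by
    rw [← lintegral_indicator_one hs, ← lintegral_indicator_one hs,
      h _ (measurable_one.indicator hs)]

end Aux

/-- full error estimate between the projection `(Q ∘ T̃)♯μ_I` of the
numerical geometric optics approximation measure onto the target domain and the target
measure `μ_t`, in the Wasserstein metric of order `p`. -/
theorem stmt_17 {n : ℕ} (hn : 1 ≤ n) (p : ℝ) (hp : 1 ≤ p)
    (ΩI ΩO : Set (EuclideanSpace ℝ (Fin (n + 1))))
    (hΩIne : ΩI.Nonempty) (hΩIc : IsCompact ΩI)
    (hΩOne : ΩO.Nonempty) (hΩOc : IsCompact ΩO)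
    (hΩIs : ΩI ⊆ Metric.sphere (0 : EuclideanSpace ℝ (Fin (n + 1))) 1)
    (hΩOs : ΩO ⊆ Metric.sphere (0 : EuclideanSpace ℝ (Fin (n + 1))) 1)
    (M : ℝ) (hM : 0 ≤ M)
    -- the source measure μ_I on Ω_I of total mass M, discretized by a Borel
    -- nearest-point map F onto points xs of covering radius r ≤ 2
    (μI : Measure (EuclideanSpace ℝ (Fin (n + 1))))
    (hμIsupp : μI ΩIᶜ = 0) (hμImass : μI Set.univ = ENNReal.ofReal M)
    (N : ℕ) (xs : Fin N → EuclideanSpace ℝ (Fin (n + 1))) (hxs : ∀ j, xs j ∈ ΩI)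
    (r : ℝ) (hr0 : 0 ≤ r) (hr2 : r ≤ 2)
    (F : EuclideanSpace ℝ (Fin (n + 1)) → EuclideanSpace ℝ (Fin (n + 1)))
    (hFmeas : Measurable F)
    (hFrange : ∀ x ∈ ΩI, F x ∈ Set.range xs)
    (hFnear : ∀ x ∈ ΩI, dist x (F x) = ⨅ j, dist x (xs j))
    (hFr : ∀ x ∈ ΩI, dist x (F x) ≤ r)
    -- the target measure μ_t on Ω of total mass M, discretized by a Borel
    -- nearest-point map G onto points zs of covering radius l
    (Ω : Set (EuclideanSpace ℝ (Fin n))) (hΩne : Ω.Nonempty) (hΩc : IsCompact Ω)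
    (μt : Measure (EuclideanSpace ℝ (Fin n)))
    (hμtsupp : μt Ωᶜ = 0) (hμtmass : μt Set.univ = ENNReal.ofReal M)
    (K : ℕ) (zs : Fin K → EuclideanSpace ℝ (Fin n)) (hzs : ∀ i, zs i ∈ Ω)
    (l : ℝ) (hl0 : 0 ≤ l)
    (G : EuclideanSpace ℝ (Fin n) → EuclideanSpace ℝ (Fin n))
    (hGmeas : Measurable G)
    (hGrange : ∀ z ∈ Ω, G z ∈ Set.range zs)
    (hGnear : ∀ z ∈ Ω, dist z (G z) = ⨅ i, dist z (zs i))
    (hGl : ∀ z ∈ Ω, dist z (G z) ≤ l)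
    -- the homeomorphism Q : Ω_O → Ω, Lipschitz with constant L_Q from the geodesic
    -- distance, whose inverse is C₁-Lipschitz in the Euclidean distances, C₁ l ≤ 2
    (Q : EuclideanSpace ℝ (Fin (n + 1)) → EuclideanSpace ℝ (Fin n))
    (Qinv : EuclideanSpace ℝ (Fin n) → EuclideanSpace ℝ (Fin (n + 1)))
    (hQmeas : Measurable Q) (hQinvmeas : Measurable Qinv)
    (hQmaps : Set.MapsTo Q ΩO Ω) (hQinvmaps : Set.MapsTo Qinv Ω ΩO)
    (hQc : ContinuousOn Q ΩO) (hQinvc : ContinuousOn Qinv Ω)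
    (hQleft : ∀ y ∈ ΩO, Qinv (Q y) = y) (hQright : ∀ z ∈ Ω, Q (Qinv z) = z)
    (LQ C₁ : ℝ) (hLQ0 : 0 ≤ LQ) (hC₁0 : 0 ≤ C₁)
    (hQLip : ∀ y ∈ ΩO, ∀ y' ∈ ΩO, dist (Q y) (Q y') ≤ LQ * Real.arccos ⟪y, y'⟫)
    (hQinvLip : ∀ z ∈ Ω, ∀ z' ∈ Ω, dist (Qinv z) (Qinv z') ≤ C₁ * dist z z')
    (hCl : C₁ * l ≤ 2)
    -- the reflecting map T̃ : Ω_I → Ω_O, Lipschitz with constant L_T for the geodesic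
    -- distances, with W_p(T̃♯μ_I^N, μ_O^K) ≤ δ
    (T : EuclideanSpace ℝ (Fin (n + 1)) → EuclideanSpace ℝ (Fin (n + 1)))
    (hTmeas : Measurable T) (hTmaps : Set.MapsTo T ΩI ΩO)
    (LT : ℝ) (hLT0 : 0 ≤ LT)
    (hTLip : ∀ x ∈ ΩI, ∀ x' ∈ ΩI,
      Real.arccos ⟪T x, T x'⟫ ≤ LT * Real.arccos ⟪x, x'⟫)
    (δ : ℝ) (hδ0 : 0 ≤ δ)
    (hδ : Wp (fun x y => Real.arccos ⟪x, y⟫) p ((μI.map F).map T) ((μt.map G).map Qinv)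
      ≤ ENNReal.ofReal δ) :
    Wp dist p ((μI.map T).map Q) μt
      ≤ ENNReal.ofReal (LQ *
          (LT * (M ^ (1 / p) * p ^ (-(1 / p)) * Real.arccos (1 - r ^ 2 / 2))
            + δ
            + M ^ (1 / p) * p ^ (-(1 / p)) * Real.arccos (1 - (C₁ * l) ^ 2 / 2))) := by
  classical
  have hp0 : (0:ℝ) < p := lt_of_lt_of_le one_pos hp
  have hp0' : p ≠ 0 := hp0.ne'
  have hip0 : (0:ℝ) ≤ 1 / p := by positivity
  have hip1 : (1:ℝ) / p ≤ 1 := by rw [div_le_one hp0]; exact hp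
  haveI hμIf : IsFiniteMeasure μI := ⟨by rw [hμImass]; exact ENNReal.ofReal_lt_top⟩
  haveI hμtf : IsFiniteMeasure μt := ⟨by rw [hμtmass]; exact ENNReal.ofReal_lt_top⟩
  have hnormI : ∀ x ∈ ΩI, ‖x‖ = 1 := fun x hx => by
    have := hΩIs hx; rwa [mem_sphere_zero_iff_norm] at this
  have hnormO : ∀ x ∈ ΩO, ‖x‖ = 1 := fun x hx => by
    have := hΩOs hx; rwa [mem_sphere_zero_iff_norm] at this
  have hFmem : ∀ x ∈ ΩI, F x ∈ ΩI := fun x hx => by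
    obtain ⟨j, hj⟩ := hFrange x hx; rw [← hj]; exact hxs j
  have hGmem : ∀ z ∈ Ω, G z ∈ Ω := fun z hz => by
    obtain ⟨i, hi⟩ := hGrange z hz; rw [← hi]; exact hzs i
  have hTF : Measurable (T ∘ F) := hTmeas.comp hFmeas
  have hQG : Measurable (Qinv ∘ G) := hQinvmeas.comp hGmeas
  have hΩImeas : MeasurableSet ΩI := hΩIc.isClosed.measurableSet
  have hΩOmeas : MeasurableSet ΩO := hΩOc.isClosed.measurableSet
  rw [Measure.map_map hTmeas hFmeas, Measure.map_map hQinvmeas hGmeas] at hδ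
  set β : Measure (EuclideanSpace ℝ (Fin (n + 1))) := μI.map (T ∘ F) with hβdef
  set γm : Measure (EuclideanSpace ℝ (Fin (n + 1))) := μt.map (Qinv ∘ G) with hγmdef
  have hβuniv : β Set.univ = ENNReal.ofReal M := by
    rw [hβdef, Measure.map_apply hTF MeasurableSet.univ, Set.preimage_univ, hμImass]
  have hγmΩO : γm ΩOᶜ = 0 := by
    rw [hγmdef, Measure.map_apply hQG hΩOmeas.compl]
    refine measure_mono_null ?_ hμtsupp
    intro z hz hzΩ
    exact hz (hQinvmaps (hGmem z hzΩ))
  have minner : Measurable fun b : (EuclideanSpace ℝ (Fin (n + 1))) × (EuclideanSpace ℝ (Fin (n + 1))) => ENNReal.ofReal (Real.arccos ⟪b.1, b.2⟫) := by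
    have h1 : Measurable fun b : (EuclideanSpace ℝ (Fin (n + 1))) × (EuclideanSpace ℝ (Fin (n + 1))) => (⟪b.1, b.2⟫ : ℝ) :=
      measurable_fst.inner (𝕜 := ℝ) measurable_snd
    exact (Real.continuous_arccos.measurable.comp h1).ennreal_ofReal
  set u : ℝ := LT * (M ^ (1 / p) * p ^ (-(1 / p)) * Real.arccos (1 - r ^ 2 / 2)) with hu
  set v : ℝ := M ^ (1 / p) * p ^ (-(1 / p)) * Real.arccos (1 - (C₁ * l) ^ 2 / 2) with hv
  have hMp : (0:ℝ) ≤ M ^ (1 / p) := Real.rpow_nonneg hM _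
  have hpp : (0:ℝ) ≤ p ^ (-(1 / p)) := Real.rpow_nonneg hp0.le _
  have hu0 : 0 ≤ u := by
    rw [hu]
    have h1 := Real.arccos_nonneg (1 - r ^ 2 / 2)
    positivity
  have hv0 : 0 ≤ v := by
    rw [hv]
    have h1 := Real.arccos_nonneg (1 - (C₁ * l) ^ 2 / 2)
    positivity
  have hinvp : (1 / p) ^ (1 / p) = p ^ (-(1 / p)) := by
    rw [one_div p, Real.inv_rpow hp0.le, ← Real.rpow_neg hp0.le]
  -- MAIN : bound for an arbitrary coupling of β and γm
  have main : ∀ γ : Measure ((EuclideanSpace ℝ (Fin (n + 1))) × (EuclideanSpace ℝ (Fin (n + 1)))), γ.map Prod.fst = β → γ.map Prod.snd = γm →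
      Wp dist p ((μI.map T).map Q) μt ≤
        ENNReal.ofReal LQ * (ENNReal.ofReal u +
          (∫⁻ q, ENNReal.ofReal (1 / p * Real.arccos ⟪q.1, q.2⟫ ^ p) ∂γ) ^ (1 / p) +
          ENNReal.ofReal v) := by
    intro γ hγ1 hγ2
    haveI : IsFiniteMeasure γ := by
      constructor
      have h1 : γ.map Prod.fst Set.univ = γ Set.univ := by
        rw [Measure.map_apply measurable_fst MeasurableSet.univ, Set.preimage_univ]
      rw [← h1, hγ1, hβuniv]
      exact ENNReal.ofReal_lt_top
    have hpair : Measurable fun z : EuclideanSpace ℝ (Fin n) => (Qinv (G z), Qinv z) :=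
      (hQinvmeas.comp hGmeas).prodMk hQinvmeas
    set lam : Measure ((EuclideanSpace ℝ (Fin (n + 1))) × (EuclideanSpace ℝ (Fin (n + 1)))) := μt.map (fun z => (Qinv (G z), Qinv z)) with hlamdef
    haveI : IsFiniteMeasure lam := by
      constructor
      rw [hlamdef, Measure.map_apply hpair MeasurableSet.univ, Set.preimage_univ, hμtmass]
      exact ENNReal.ofReal_lt_top
    have hγfst : γ.fst = β := hγ1
    have hlamfst : lam.fst = γm := by
      show lam.map Prod.fst = γm
      rw [hlamdef, Measure.map_map measurable_fst hpair]
      rfl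
    set κ₁ : Kernel (EuclideanSpace ℝ (Fin (n + 1))) (EuclideanSpace ℝ (Fin (n + 1))) := γ.condKernel.comap (fun x => T (F x)) hTF with hκ₁
    have hκ₁app : ∀ x, κ₁ x = γ.condKernel (T (F x)) := fun x => by
      rw [hκ₁, Kernel.comap_apply]
    set μ1 : Measure ((EuclideanSpace ℝ (Fin (n + 1))) × (EuclideanSpace ℝ (Fin (n + 1)))) := μI ⊗ₘ κ₁ with hμ1
    haveI : IsFiniteMeasure μ1 := by
      constructor
      rw [hμ1, Measure.compProd_apply_univ, hμImass]
      exact ENNReal.ofReal_lt_top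
    set ρ : Measure (((EuclideanSpace ℝ (Fin (n + 1))) × (EuclideanSpace ℝ (Fin (n + 1)))) × (EuclideanSpace ℝ (Fin (n + 1)))) := μ1 ⊗ₘ (Kernel.prodMkLeft (EuclideanSpace ℝ (Fin (n + 1))) lam.condKernel) with hρ
    have m11 : Measurable fun q : ((EuclideanSpace ℝ (Fin (n + 1))) × (EuclideanSpace ℝ (Fin (n + 1)))) × (EuclideanSpace ℝ (Fin (n + 1))) => q.1.1 :=
      measurable_fst.comp measurable_fst
    have m12 : Measurable fun q : ((EuclideanSpace ℝ (Fin (n + 1))) × (EuclideanSpace ℝ (Fin (n + 1)))) × (EuclideanSpace ℝ (Fin (n + 1))) => q.1.2 :=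
      measurable_snd.comp measurable_fst
    have P : ∀ ψ : (EuclideanSpace ℝ (Fin (n + 1))) × (EuclideanSpace ℝ (Fin (n + 1))) → ℝ≥0∞, Measurable ψ →
        ∫⁻ q : (EuclideanSpace ℝ (Fin (n + 1))) × (EuclideanSpace ℝ (Fin (n + 1))), ψ (T (F q.1), q.2) ∂μ1 = ∫⁻ q, ψ q ∂γ := by
      intro ψ hψ
      have hcomp : Measurable fun q : (EuclideanSpace ℝ (Fin (n + 1))) × (EuclideanSpace ℝ (Fin (n + 1))) => ψ (T (F q.1), q.2) :=
        hψ.comp ((hTF.comp measurable_fst).prodMk measurable_snd)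
      rw [hμ1, Measure.lintegral_compProd hcomp]
      have hg : Measurable fun y => ∫⁻ w, ψ (y, w) ∂(γ.condKernel y) :=
        Measurable.lintegral_kernel_prod_right' (κ := γ.condKernel) hψ
      calc ∫⁻ x, ∫⁻ w, ψ (T (F x), w) ∂(κ₁ x) ∂μI
          = ∫⁻ x, (fun y => ∫⁻ w, ψ (y, w) ∂(γ.condKernel y)) ((T ∘ F) x) ∂μI := by
            refine lintegral_congr fun x => ?_
            rw [hκ₁app x]
            rfl
        _ = ∫⁻ y, ∫⁻ w, ψ (y, w) ∂(γ.condKernel y) ∂β := by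
            rw [hβdef, lintegral_map hg hTF]
        _ = ∫⁻ q, ψ q ∂(γ.fst ⊗ₘ γ.condKernel) := by
            rw [hγfst, Measure.lintegral_compProd hψ]
        _ = ∫⁻ q, ψ q ∂γ := by rw [γ.disintegrate]
    have T1 : ∀ g : (EuclideanSpace ℝ (Fin (n + 1))) → ℝ≥0∞, Measurable g →
        ∫⁻ q : ((EuclideanSpace ℝ (Fin (n + 1))) × (EuclideanSpace ℝ (Fin (n + 1)))) × (EuclideanSpace ℝ (Fin (n + 1))), g q.1.1 ∂ρ = ∫⁻ x, g x ∂μI := by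
      intro g hg
      have hgq1 : Measurable fun q : ((EuclideanSpace ℝ (Fin (n + 1))) × (EuclideanSpace ℝ (Fin (n + 1)))) × (EuclideanSpace ℝ (Fin (n + 1))) => g q.1.1 :=
        hg.comp (measurable_fst.comp measurable_fst)
      have hgq2 : Measurable fun pr : (EuclideanSpace ℝ (Fin (n + 1))) × (EuclideanSpace ℝ (Fin (n + 1))) => g pr.1 := hg.comp measurable_fst
      rw [hρ, Measure.lintegral_compProd hgq1]
      simp only [Kernel.prodMkLeft_apply, lintegral_const, measure_univ, mul_one]
      rw [hμ1, Measure.lintegral_compProd hgq2]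
      simp only [lintegral_const, measure_univ, mul_one]
    have T2 : ∀ ψ : (EuclideanSpace ℝ (Fin (n + 1))) × (EuclideanSpace ℝ (Fin (n + 1))) → ℝ≥0∞, Measurable ψ →
        ∫⁻ q : ((EuclideanSpace ℝ (Fin (n + 1))) × (EuclideanSpace ℝ (Fin (n + 1)))) × (EuclideanSpace ℝ (Fin (n + 1))), ψ (T (F q.1.1), q.1.2) ∂ρ = ∫⁻ q, ψ q ∂γ := by
      intro ψ hψ
      have hf : Measurable fun pr : (EuclideanSpace ℝ (Fin (n + 1))) × (EuclideanSpace ℝ (Fin (n + 1))) => ψ (T (F pr.1), pr.2) :=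
        hψ.comp ((hTF.comp measurable_fst).prodMk measurable_snd)
      have hfq : Measurable fun q : ((EuclideanSpace ℝ (Fin (n + 1))) × (EuclideanSpace ℝ (Fin (n + 1)))) × (EuclideanSpace ℝ (Fin (n + 1))) => ψ (T (F q.1.1), q.1.2) :=
        hf.comp measurable_fst
      rw [hρ, Measure.lintegral_compProd hfq]
      simp only [Kernel.prodMkLeft_apply, lintegral_const, measure_univ, mul_one]
      exact P ψ hψ
    have T3 : ∀ ψ : (EuclideanSpace ℝ (Fin (n + 1))) × (EuclideanSpace ℝ (Fin (n + 1))) → ℝ≥0∞, Measurable ψ →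
        ∫⁻ q : ((EuclideanSpace ℝ (Fin (n + 1))) × (EuclideanSpace ℝ (Fin (n + 1)))) × (EuclideanSpace ℝ (Fin (n + 1))), ψ (q.1.2, q.2) ∂ρ = ∫⁻ z, ψ (Qinv (G z), Qinv z) ∂μt := by
      intro ψ hψ
      have hf : Measurable fun q : ((EuclideanSpace ℝ (Fin (n + 1))) × (EuclideanSpace ℝ (Fin (n + 1)))) × (EuclideanSpace ℝ (Fin (n + 1))) => ψ (q.1.2, q.2) :=
        hψ.comp ((measurable_snd.comp measurable_fst).prodMk measurable_snd)
      rw [hρ, Measure.lintegral_compProd hf]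
      have hξ : Measurable fun w => ∫⁻ vv, ψ (w, vv) ∂(lam.condKernel w) :=
        Measurable.lintegral_kernel_prod_right' (κ := lam.condKernel) hψ
      calc ∫⁻ pr : (EuclideanSpace ℝ (Fin (n + 1))) × (EuclideanSpace ℝ (Fin (n + 1))), ∫⁻ vv, ψ (pr.2, vv) ∂(Kernel.prodMkLeft (EuclideanSpace ℝ (Fin (n + 1))) lam.condKernel pr) ∂μ1
          = ∫⁻ pr : (EuclideanSpace ℝ (Fin (n + 1))) × (EuclideanSpace ℝ (Fin (n + 1))),
              (fun b : (EuclideanSpace ℝ (Fin (n + 1))) × (EuclideanSpace ℝ (Fin (n + 1))) => ∫⁻ vv, ψ (b.2, vv) ∂(lam.condKernel b.2)) (T (F pr.1), pr.2)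
              ∂μ1 := by
            refine lintegral_congr fun pr => ?_
            rw [Kernel.prodMkLeft_apply]
        _ = ∫⁻ b : (EuclideanSpace ℝ (Fin (n + 1))) × (EuclideanSpace ℝ (Fin (n + 1))), ∫⁻ vv, ψ (b.2, vv) ∂(lam.condKernel b.2) ∂γ :=
            P _ (hξ.comp measurable_snd)
        _ = ∫⁻ w, ∫⁻ vv, ψ (w, vv) ∂(lam.condKernel w) ∂γm := by
            rw [← hγ2, lintegral_map hξ measurable_snd]
        _ = ∫⁻ q, ψ q ∂(lam.fst ⊗ₘ lam.condKernel) := by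
            rw [Measure.lintegral_compProd hψ, hlamfst]
        _ = ∫⁻ q, ψ q ∂lam := by rw [lam.disintegrate]
        _ = ∫⁻ z, ψ (Qinv (G z), Qinv z) ∂μt := by rw [hlamdef, lintegral_map hψ hpair]
    set Φ : ((EuclideanSpace ℝ (Fin (n + 1))) × (EuclideanSpace ℝ (Fin (n + 1)))) × (EuclideanSpace ℝ (Fin (n + 1))) → (EuclideanSpace ℝ (Fin n)) × (EuclideanSpace ℝ (Fin n)) :=
      fun q => (Q (T q.1.1), Q q.2) with hΦdef
    have hΦ : Measurable Φ :=
      (hQmeas.comp (hTmeas.comp (measurable_fst.comp measurable_fst))).prodMk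
        (hQmeas.comp measurable_snd)
    set ζ := ρ.map Φ with hζ
    have mem1 : ζ.map Prod.fst = (μI.map T).map Q := by
      rw [Measure.map_map hQmeas hTmeas, hζ, Measure.map_map measurable_fst hΦ]
      apply measure_ext_of_lintegral
      intro f hf
      rw [lintegral_map hf (measurable_fst.comp hΦ), lintegral_map hf (hQmeas.comp hTmeas)]
      exact T1 (fun x => f (Q (T x))) (hf.comp (hQmeas.comp hTmeas))
    have mem2 : ζ.map Prod.snd = μt := by
      rw [hζ, Measure.map_map measurable_snd hΦ]
      apply measure_ext_of_lintegral
      intro f hf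
      rw [lintegral_map hf (measurable_snd.comp hΦ)]
      have h3 := T3 (fun b => f (Q b.2)) ((hf.comp hQmeas).comp measurable_snd)
      have hlhs : ∫⁻ q, f ((Prod.snd ∘ Φ) q) ∂ρ = ∫⁻ q : ((EuclideanSpace ℝ (Fin (n + 1))) × (EuclideanSpace ℝ (Fin (n + 1)))) × (EuclideanSpace ℝ (Fin (n + 1))), f (Q q.2) ∂ρ := rfl
      rw [hlhs, h3]
      refine lintegral_congr_ae ?_
      have hΩae : ∀ᵐ z ∂μt, z ∈ Ω := by
        rw [ae_iff]; exact hμtsupp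
      filter_upwards [hΩae] with z hz
      rw [hQright z hz]
    have hmapx : ρ.map (fun q => q.1.1) = μI := by
      apply measure_ext_of_lintegral
      intro f hf
      rw [lintegral_map hf m11]
      exact T1 f hf
    have hae1 : ∀ᵐ q ∂ρ, q.1.1 ∈ ΩI := by
      have h0 : ∀ᵐ x ∂μI, x ∈ ΩI := by rw [ae_iff]; exact hμIsupp
      rw [← hmapx] at h0
      exact (ae_map_iff m11.aemeasurable hΩImeas).mp h0
    have hmapw : ρ.map (fun q => q.1.2) = γm := by
      apply measure_ext_of_lintegral
      intro f hf
      rw [lintegral_map hf m12]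
      have h2 := T2 (fun b => f b.2) (hf.comp measurable_snd)
      rw [h2, ← hγ2, lintegral_map hf measurable_snd]
    have hae2 : ∀ᵐ q ∂ρ, q.1.2 ∈ ΩO := by
      have h0 : ∀ᵐ w ∂γm, w ∈ ΩO := by rw [ae_iff]; exact hγmΩO
      rw [← hmapw] at h0
      exact (ae_map_iff m12.aemeasurable hΩOmeas).mp h0
    have hmapv : ρ.map (fun q => q.2) = μt.map Qinv := by
      apply measure_ext_of_lintegral
      intro f hf
      rw [lintegral_map hf measurable_snd, lintegral_map hf hQinvmeas]
      exact T3 (fun b => f b.2) (hf.comp measurable_snd)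
    have hae3 : ∀ᵐ q ∂ρ, q.2 ∈ ΩO := by
      have hQiΩO : (μt.map Qinv) ΩOᶜ = 0 := by
        rw [Measure.map_apply hQinvmeas hΩOmeas.compl]
        refine measure_mono_null ?_ hμtsupp
        intro z hz hzΩ
        exact hz (hQinvmaps hzΩ)
      have h0 : ∀ᵐ w ∂(μt.map Qinv), w ∈ ΩO := by rw [ae_iff]; exact hQiΩO
      rw [← hmapv] at h0
      exact (ae_map_iff measurable_snd.aemeasurable hΩOmeas).mp h0
    have hT1 : Measurable fun q : ((EuclideanSpace ℝ (Fin (n + 1))) × (EuclideanSpace ℝ (Fin (n + 1)))) × (EuclideanSpace ℝ (Fin (n + 1))) => T q.1.1 := hTmeas.comp m11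
    have hT2 : Measurable fun q : ((EuclideanSpace ℝ (Fin (n + 1))) × (EuclideanSpace ℝ (Fin (n + 1)))) × (EuclideanSpace ℝ (Fin (n + 1))) => T (F q.1.1) := hTF.comp m11
    have hf₁ : Measurable fun q : ((EuclideanSpace ℝ (Fin (n + 1))) × (EuclideanSpace ℝ (Fin (n + 1)))) × (EuclideanSpace ℝ (Fin (n + 1))) =>
        ENNReal.ofReal (Real.arccos ⟪T q.1.1, T (F q.1.1)⟫) :=
      (Real.continuous_arccos.measurable.comp (hT1.inner (𝕜 := ℝ) hT2)).ennreal_ofReal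
    have hf₂ : Measurable fun q : ((EuclideanSpace ℝ (Fin (n + 1))) × (EuclideanSpace ℝ (Fin (n + 1)))) × (EuclideanSpace ℝ (Fin (n + 1))) =>
        ENNReal.ofReal (Real.arccos ⟪T (F q.1.1), q.1.2⟫) :=
      (Real.continuous_arccos.measurable.comp (hT2.inner (𝕜 := ℝ) m12)).ennreal_ofReal
    have hf₃ : Measurable fun q : ((EuclideanSpace ℝ (Fin (n + 1))) × (EuclideanSpace ℝ (Fin (n + 1)))) × (EuclideanSpace ℝ (Fin (n + 1))) =>
        ENNReal.ofReal (Real.arccos ⟪q.1.2, q.2⟫) :=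
      (Real.continuous_arccos.measurable.comp (m12.inner (𝕜 := ℝ) measurable_snd)).ennreal_ofReal
    have mcost : Measurable fun q :
        (EuclideanSpace ℝ (Fin n)) × (EuclideanSpace ℝ (Fin n)) =>
        ENNReal.ofReal (1 / p * dist q.1 q.2 ^ p) :=
      ((((Real.continuous_rpow_const hp0.le).measurable).comp
        measurable_dist).const_mul _).ennreal_ofReal
    have stepA : Wp dist p ((μI.map T).map Q) μt ≤
        (∫⁻ q : ((EuclideanSpace ℝ (Fin (n + 1))) × (EuclideanSpace ℝ (Fin (n + 1)))) × (EuclideanSpace ℝ (Fin (n + 1))),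
          ENNReal.ofReal (1 / p * dist (Q (T q.1.1)) (Q q.2) ^ p) ∂ρ) ^ (1 / p) := by
      have h1 : OTCost (fun x y => ENNReal.ofReal (1 / p * dist x y ^ p))
          ((μI.map T).map Q) μt ≤
          ∫⁻ q, ENNReal.ofReal (1 / p * dist q.1 q.2 ^ p) ∂ζ := by
        simp only [OTCost]
        exact iInf₂_le ζ ⟨mem1, mem2⟩
      have h2 : ∫⁻ q, ENNReal.ofReal (1 / p * dist q.1 q.2 ^ p) ∂ζ =
          ∫⁻ q : ((EuclideanSpace ℝ (Fin (n + 1))) × (EuclideanSpace ℝ (Fin (n + 1)))) × (EuclideanSpace ℝ (Fin (n + 1))),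
            ENNReal.ofReal (1 / p * dist (Q (T q.1.1)) (Q q.2) ^ p) ∂ρ := by
        rw [hζ, lintegral_map mcost hΦ]
      simp only [Wp]
      exact ENNReal.rpow_le_rpow (h2 ▸ h1) hip0
    have hpt : ∀ᵐ q ∂ρ, ENNReal.ofReal (1 / p * dist (Q (T q.1.1)) (Q q.2) ^ p) ≤
        ENNReal.ofReal (1 / p) * ENNReal.ofReal LQ ^ p *
          ((ENNReal.ofReal (Real.arccos ⟪T q.1.1, T (F q.1.1)⟫) +
            ENNReal.ofReal (Real.arccos ⟪T (F q.1.1), q.1.2⟫)) +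
            ENNReal.ofReal (Real.arccos ⟪q.1.2, q.2⟫)) ^ p := by
      filter_upwards [hae1, hae2, hae3] with q h1 h2 h3
      have hTx : T q.1.1 ∈ ΩO := hTmaps h1
      have hTFx : T (F q.1.1) ∈ ΩO := hTmaps (hFmem _ h1)
      have n1 : ‖T q.1.1‖ = 1 := hnormO _ hTx
      have n2 : ‖T (F q.1.1)‖ = 1 := hnormO _ hTFx
      have n3 : ‖q.1.2‖ = 1 := hnormO _ h2
      have n4 : ‖q.2‖ = 1 := hnormO _ h3
      have tri : Real.arccos ⟪T q.1.1, q.2⟫ ≤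
          Real.arccos ⟪T q.1.1, T (F q.1.1)⟫ + Real.arccos ⟪T (F q.1.1), q.1.2⟫ +
            Real.arccos ⟪q.1.2, q.2⟫ := by
        have t1 := arccos_inner_triangle n1 n2 n4
        have t2 := arccos_inner_triangle n2 n3 n4
        linarith
      have hdist : dist (Q (T q.1.1)) (Q q.2) ≤
          LQ * (Real.arccos ⟪T q.1.1, T (F q.1.1)⟫ + Real.arccos ⟪T (F q.1.1), q.1.2⟫ +
            Real.arccos ⟪q.1.2, q.2⟫) :=
        (hQLip _ hTx _ h3).trans (mul_le_mul_of_nonneg_left tri hLQ0)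
      have e1 : ENNReal.ofReal (1 / p * dist (Q (T q.1.1)) (Q q.2) ^ p) =
          ENNReal.ofReal (1 / p) * ENNReal.ofReal (dist (Q (T q.1.1)) (Q q.2)) ^ p := by
        rw [ENNReal.ofReal_mul hip0, ENNReal.ofReal_rpow_of_nonneg dist_nonneg hp0.le]
      rw [e1]
      have e2 : ENNReal.ofReal (dist (Q (T q.1.1)) (Q q.2)) ≤
          ENNReal.ofReal LQ *
            ((ENNReal.ofReal (Real.arccos ⟪T q.1.1, T (F q.1.1)⟫) +
              ENNReal.ofReal (Real.arccos ⟪T (F q.1.1), q.1.2⟫)) +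
              ENNReal.ofReal (Real.arccos ⟪q.1.2, q.2⟫)) := by
        refine (ENNReal.ofReal_le_ofReal hdist).trans (le_of_eq ?_)
        rw [ENNReal.ofReal_mul hLQ0, ENNReal.ofReal_add
          (add_nonneg (Real.arccos_nonneg _) (Real.arccos_nonneg _)) (Real.arccos_nonneg _),
          ENNReal.ofReal_add (Real.arccos_nonneg _) (Real.arccos_nonneg _)]
      calc ENNReal.ofReal (1 / p) * ENNReal.ofReal (dist (Q (T q.1.1)) (Q q.2)) ^ p
          ≤ ENNReal.ofReal (1 / p) * (ENNReal.ofReal LQ *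
            ((ENNReal.ofReal (Real.arccos ⟪T q.1.1, T (F q.1.1)⟫) +
              ENNReal.ofReal (Real.arccos ⟪T (F q.1.1), q.1.2⟫)) +
              ENNReal.ofReal (Real.arccos ⟪q.1.2, q.2⟫))) ^ p :=
            mul_le_mul' le_rfl (ENNReal.rpow_le_rpow e2 hp0.le)
        _ = _ := by
            rw [ENNReal.mul_rpow_of_nonneg _ _ hp0.le, mul_assoc]
    set J : ℝ≥0∞ := ∫⁻ q : ((EuclideanSpace ℝ (Fin (n + 1))) × (EuclideanSpace ℝ (Fin (n + 1)))) × (EuclideanSpace ℝ (Fin (n + 1))),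
        ((ENNReal.ofReal (Real.arccos ⟪T q.1.1, T (F q.1.1)⟫) +
          ENNReal.ofReal (Real.arccos ⟪T (F q.1.1), q.1.2⟫)) +
          ENNReal.ofReal (Real.arccos ⟪q.1.2, q.2⟫)) ^ p ∂ρ with hJ
    have stepC : ∫⁻ q : ((EuclideanSpace ℝ (Fin (n + 1))) × (EuclideanSpace ℝ (Fin (n + 1)))) × (EuclideanSpace ℝ (Fin (n + 1))),
        ENNReal.ofReal (1 / p * dist (Q (T q.1.1)) (Q q.2) ^ p) ∂ρ ≤
        ENNReal.ofReal (1 / p) * ENNReal.ofReal LQ ^ p * J := by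
      calc ∫⁻ q : ((EuclideanSpace ℝ (Fin (n + 1))) × (EuclideanSpace ℝ (Fin (n + 1)))) × (EuclideanSpace ℝ (Fin (n + 1))),
          ENNReal.ofReal (1 / p * dist (Q (T q.1.1)) (Q q.2) ^ p) ∂ρ
          ≤ ∫⁻ q : ((EuclideanSpace ℝ (Fin (n + 1))) × (EuclideanSpace ℝ (Fin (n + 1)))) × (EuclideanSpace ℝ (Fin (n + 1))), ENNReal.ofReal (1 / p) * ENNReal.ofReal LQ ^ p *
            ((ENNReal.ofReal (Real.arccos ⟪T q.1.1, T (F q.1.1)⟫) +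
              ENNReal.ofReal (Real.arccos ⟪T (F q.1.1), q.1.2⟫)) +
              ENNReal.ofReal (Real.arccos ⟪q.1.2, q.2⟫)) ^ p ∂ρ := lintegral_mono_ae hpt
        _ = _ := by
            rw [hJ]; exact lintegral_const_mul _ (((hf₁.add hf₂).add hf₃).pow_const _)
    set S₁ : ℝ≥0∞ := (∫⁻ q : ((EuclideanSpace ℝ (Fin (n + 1))) × (EuclideanSpace ℝ (Fin (n + 1)))) × (EuclideanSpace ℝ (Fin (n + 1))),
        ENNReal.ofReal (Real.arccos ⟪T q.1.1, T (F q.1.1)⟫) ^ p ∂ρ) ^ (1 / p) with hS₁def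
    set S₂ : ℝ≥0∞ := (∫⁻ q : ((EuclideanSpace ℝ (Fin (n + 1))) × (EuclideanSpace ℝ (Fin (n + 1)))) × (EuclideanSpace ℝ (Fin (n + 1))),
        ENNReal.ofReal (Real.arccos ⟪T (F q.1.1), q.1.2⟫) ^ p ∂ρ) ^ (1 / p) with hS₂def
    set S₃ : ℝ≥0∞ := (∫⁻ q : ((EuclideanSpace ℝ (Fin (n + 1))) × (EuclideanSpace ℝ (Fin (n + 1)))) × (EuclideanSpace ℝ (Fin (n + 1))),
        ENNReal.ofReal (Real.arccos ⟪q.1.2, q.2⟫) ^ p ∂ρ) ^ (1 / p) with hS₃def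
    have hMink : J ^ (1 / p) ≤ S₁ + S₂ + S₃ := by
      calc J ^ (1 / p)
          ≤ (∫⁻ q : ((EuclideanSpace ℝ (Fin (n + 1))) × (EuclideanSpace ℝ (Fin (n + 1)))) × (EuclideanSpace ℝ (Fin (n + 1))),
              (ENNReal.ofReal (Real.arccos ⟪T q.1.1, T (F q.1.1)⟫) +
                ENNReal.ofReal (Real.arccos ⟪T (F q.1.1), q.1.2⟫)) ^ p ∂ρ) ^ (1 / p) +
            S₃ := by
            rw [hJ, hS₃def]
            exact ENNReal.lintegral_Lp_add_le (hf₁.add hf₂).aemeasurable hf₃.aemeasurable hp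
        _ ≤ S₁ + S₂ + S₃ := by
            rw [hS₁def, hS₂def]
            exact add_le_add
              (ENNReal.lintegral_Lp_add_le hf₁.aemeasurable hf₂.aemeasurable hp) le_rfl
    have hS₁ : S₁ ≤ ENNReal.ofReal (LT * Real.arccos (1 - r ^ 2 / 2)) *
        ENNReal.ofReal M ^ (1 / p) := by
      have h1 : ∫⁻ q : ((EuclideanSpace ℝ (Fin (n + 1))) × (EuclideanSpace ℝ (Fin (n + 1)))) × (EuclideanSpace ℝ (Fin (n + 1))),
          ENNReal.ofReal (Real.arccos ⟪T q.1.1, T (F q.1.1)⟫) ^ p ∂ρ =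
          ∫⁻ x, ENNReal.ofReal (Real.arccos ⟪T x, T (F x)⟫) ^ p ∂μI :=
        T1 (fun x => ENNReal.ofReal (Real.arccos ⟪T x, T (F x)⟫) ^ p)
          (by
            have hx1 : Measurable fun x : (EuclideanSpace ℝ (Fin (n + 1))) => T x := hTmeas
            have hx2 : Measurable fun x : (EuclideanSpace ℝ (Fin (n + 1))) => T (F x) := hTF
            exact ((Real.continuous_arccos.measurable.comp
              (hx1.inner (𝕜 := ℝ) hx2)).ennreal_ofReal).pow_const _)
      have h2 : ∀ᵐ x ∂μI, ENNReal.ofReal (Real.arccos ⟪T x, T (F x)⟫) ^ p ≤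
          ENNReal.ofReal (LT * Real.arccos (1 - r ^ 2 / 2)) ^ p := by
        have h0 : ∀ᵐ x ∂μI, x ∈ ΩI := by rw [ae_iff]; exact hμIsupp
        filter_upwards [h0] with x hx
        have hreal : Real.arccos ⟪T x, T (F x)⟫ ≤ LT * Real.arccos (1 - r ^ 2 / 2) := by
          refine (hTLip x hx (F x) (hFmem x hx)).trans ?_
          exact mul_le_mul_of_nonneg_left
            (arccos_inner_le_of_dist_le (hnormI x hx) (hnormI _ (hFmem x hx)) (hFr x hx))
            hLT0
        exact ENNReal.rpow_le_rpow (ENNReal.ofReal_le_ofReal hreal) hp0.le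
      rw [hS₁def, h1]
      calc (∫⁻ x, ENNReal.ofReal (Real.arccos ⟪T x, T (F x)⟫) ^ p ∂μI) ^ (1 / p)
          ≤ (∫⁻ _x : (EuclideanSpace ℝ (Fin (n + 1))),
              ENNReal.ofReal (LT * Real.arccos (1 - r ^ 2 / 2)) ^ p ∂μI) ^ (1 / p) :=
            ENNReal.rpow_le_rpow (lintegral_mono_ae h2) hip0
        _ = ENNReal.ofReal (LT * Real.arccos (1 - r ^ 2 / 2)) *
            ENNReal.ofReal M ^ (1 / p) := by
            rw [lintegral_const, hμImass, ENNReal.mul_rpow_of_nonneg _ _ hip0,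
              ← ENNReal.rpow_mul, mul_one_div_cancel hp0', ENNReal.rpow_one]
    have hS₃ : S₃ ≤ ENNReal.ofReal (Real.arccos (1 - (C₁ * l) ^ 2 / 2)) *
        ENNReal.ofReal M ^ (1 / p) := by
      have h1 : ∫⁻ q : ((EuclideanSpace ℝ (Fin (n + 1))) × (EuclideanSpace ℝ (Fin (n + 1)))) × (EuclideanSpace ℝ (Fin (n + 1))),
          ENNReal.ofReal (Real.arccos ⟪q.1.2, q.2⟫) ^ p ∂ρ =
          ∫⁻ z, ENNReal.ofReal (Real.arccos ⟪Qinv (G z), Qinv z⟫) ^ p ∂μt :=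
        T3 (fun b => ENNReal.ofReal (Real.arccos ⟪b.1, b.2⟫) ^ p) (minner.pow_const _)
      have h2 : ∀ᵐ z ∂μt, ENNReal.ofReal (Real.arccos ⟪Qinv (G z), Qinv z⟫) ^ p ≤
          ENNReal.ofReal (Real.arccos (1 - (C₁ * l) ^ 2 / 2)) ^ p := by
        have h0 : ∀ᵐ z ∂μt, z ∈ Ω := by rw [ae_iff]; exact hμtsupp
        filter_upwards [h0] with z hz
        have hd : dist (Qinv (G z)) (Qinv z) ≤ C₁ * l := by
          refine (hQinvLip (G z) (hGmem z hz) z hz).trans ?_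
          rw [dist_comm]
          exact mul_le_mul_of_nonneg_left (hGl z hz) hC₁0
        have hreal : Real.arccos ⟪Qinv (G z), Qinv z⟫ ≤
            Real.arccos (1 - (C₁ * l) ^ 2 / 2) :=
          arccos_inner_le_of_dist_le (hnormO _ (hQinvmaps (hGmem z hz)))
            (hnormO _ (hQinvmaps hz)) hd
        exact ENNReal.rpow_le_rpow (ENNReal.ofReal_le_ofReal hreal) hp0.le
      rw [hS₃def, h1]
      calc (∫⁻ z, ENNReal.ofReal (Real.arccos ⟪Qinv (G z), Qinv z⟫) ^ p ∂μt) ^ (1 / p)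
          ≤ (∫⁻ _z : EuclideanSpace ℝ (Fin n),
              ENNReal.ofReal (Real.arccos (1 - (C₁ * l) ^ 2 / 2)) ^ p ∂μt) ^ (1 / p) :=
            ENNReal.rpow_le_rpow (lintegral_mono_ae h2) hip0
        _ = _ := by
            rw [lintegral_const, hμtmass, ENNReal.mul_rpow_of_nonneg _ _ hip0,
              ← ENNReal.rpow_mul, mul_one_div_cancel hp0', ENNReal.rpow_one]
    have hS₂ : ENNReal.ofReal (1 / p) ^ (1 / p) * S₂ =
        (∫⁻ q, ENNReal.ofReal (1 / p * Real.arccos ⟪q.1, q.2⟫ ^ p) ∂γ) ^ (1 / p) := by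
      have h1 : ∫⁻ q : ((EuclideanSpace ℝ (Fin (n + 1))) × (EuclideanSpace ℝ (Fin (n + 1)))) × (EuclideanSpace ℝ (Fin (n + 1))),
          ENNReal.ofReal (Real.arccos ⟪T (F q.1.1), q.1.2⟫) ^ p ∂ρ =
          ∫⁻ b : (EuclideanSpace ℝ (Fin (n + 1))) × (EuclideanSpace ℝ (Fin (n + 1))), ENNReal.ofReal (Real.arccos ⟪b.1, b.2⟫) ^ p ∂γ :=
        T2 (fun b => ENNReal.ofReal (Real.arccos ⟪b.1, b.2⟫) ^ p) (minner.pow_const _)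
      rw [hS₂def, h1, ← ENNReal.mul_rpow_of_nonneg _ _ hip0,
        ← lintegral_const_mul _ (minner.pow_const _)]
      congr 1
      refine lintegral_congr fun b => ?_
      rw [ENNReal.ofReal_mul hip0,
        ENNReal.ofReal_rpow_of_nonneg (Real.arccos_nonneg _) hp0.le]
    have hcollect1 : ENNReal.ofReal (1 / p) ^ (1 / p) * S₁ ≤ ENNReal.ofReal u := by
      refine (mul_le_mul' le_rfl hS₁).trans (le_of_eq ?_)
      rw [ENNReal.ofReal_rpow_of_nonneg hip0 hip0, ENNReal.ofReal_rpow_of_nonneg hM hip0,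
        ← ENNReal.ofReal_mul (mul_nonneg hLT0 (Real.arccos_nonneg _)),
        ← ENNReal.ofReal_mul (by positivity)]
      congr 1
      rw [hu, ← hinvp]
      ring
    have hcollect3 : ENNReal.ofReal (1 / p) ^ (1 / p) * S₃ ≤ ENNReal.ofReal v := by
      refine (mul_le_mul' le_rfl hS₃).trans (le_of_eq ?_)
      rw [ENNReal.ofReal_rpow_of_nonneg hip0 hip0, ENNReal.ofReal_rpow_of_nonneg hM hip0,
        ← ENNReal.ofReal_mul (Real.arccos_nonneg _),
        ← ENNReal.ofReal_mul (by positivity)]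
      congr 1
      rw [hv, ← hinvp]
      ring
    calc Wp dist p ((μI.map T).map Q) μt
        ≤ (∫⁻ q : ((EuclideanSpace ℝ (Fin (n + 1))) × (EuclideanSpace ℝ (Fin (n + 1)))) × (EuclideanSpace ℝ (Fin (n + 1))),
            ENNReal.ofReal (1 / p * dist (Q (T q.1.1)) (Q q.2) ^ p) ∂ρ) ^ (1 / p) := stepA
      _ ≤ (ENNReal.ofReal (1 / p) * ENNReal.ofReal LQ ^ p * J) ^ (1 / p) :=
          ENNReal.rpow_le_rpow stepC hip0
      _ = ENNReal.ofReal (1 / p) ^ (1 / p) * ENNReal.ofReal LQ * J ^ (1 / p) := by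
          rw [ENNReal.mul_rpow_of_nonneg _ _ hip0, ENNReal.mul_rpow_of_nonneg _ _ hip0,
            ← ENNReal.rpow_mul, mul_one_div_cancel hp0', ENNReal.rpow_one]
      _ ≤ ENNReal.ofReal (1 / p) ^ (1 / p) * ENNReal.ofReal LQ * (S₁ + S₂ + S₃) :=
          mul_le_mul' le_rfl hMink
      _ = ENNReal.ofReal LQ * (ENNReal.ofReal (1 / p) ^ (1 / p) * S₁ +
            ENNReal.ofReal (1 / p) ^ (1 / p) * S₂ +
            ENNReal.ofReal (1 / p) ^ (1 / p) * S₃) := by ring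
      _ ≤ ENNReal.ofReal LQ * (ENNReal.ofReal u +
            (∫⁻ q, ENNReal.ofReal (1 / p * Real.arccos ⟪q.1, q.2⟫ ^ p) ∂γ) ^ (1 / p) +
            ENNReal.ofReal v) :=
          mul_le_mul' le_rfl
            (add_le_add (add_le_add hcollect1 (le_of_eq hS₂)) hcollect3)
  -- conclude from `main` and the hypothesis on the middle Wasserstein distance
  simp only [Wp] at hδ
  have hWmid : OTCost (fun x y => ENNReal.ofReal (1 / p * Real.arccos ⟪x, y⟫ ^ p)) β γm ≤
      ENNReal.ofReal δ ^ p := by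
    have h1 := ENNReal.rpow_le_rpow hδ hp0.le
    rwa [← ENNReal.rpow_mul, one_div_mul_cancel hp0', ENNReal.rpow_one] at h1
  apply ENNReal.le_of_forall_pos_le_add
  intro ε hε _
  have hD2 : ENNReal.ofReal LQ + 1 ≠ ⊤ := by
    simp [ENNReal.add_eq_top]
  have hεdiv0 : ((ε : ℝ≥0∞) / (ENNReal.ofReal LQ + 1)) ≠ 0 := by
    rw [ne_eq, ENNReal.div_eq_zero_iff]
    push_neg
    exact ⟨by exact_mod_cast hε.ne', hD2⟩
  have hεdivtop : ((ε : ℝ≥0∞) / (ENNReal.ofReal LQ + 1)) ≠ ⊤ :=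
    (ENNReal.div_lt_top ENNReal.coe_ne_top (by simp)).ne
  set c : ℝ≥0∞ := ((ε : ℝ≥0∞) / (ENNReal.ofReal LQ + 1)) ^ p with hc
  have hc0 : c ≠ 0 := by
    rw [hc]
    exact (ENNReal.rpow_pos (pos_iff_ne_zero.mpr hεdiv0) hεdivtop).ne'
  have hlt : OTCost (fun x y => ENNReal.ofReal (1 / p * Real.arccos ⟪x, y⟫ ^ p)) β γm <
      ENNReal.ofReal δ ^ p + c :=
    lt_of_le_of_lt hWmid (ENNReal.lt_add_right
      (ENNReal.rpow_ne_top_of_nonneg hp0.le ENNReal.ofReal_ne_top) hc0)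
  rw [OTCost] at hlt
  obtain ⟨γ, hγlt⟩ := iInf_lt_iff.mp hlt
  obtain ⟨hγS, hγlt2⟩ := iInf_lt_iff.mp hγlt
  refine (main γ hγS.1 hγS.2).trans ?_
  have hcost : (∫⁻ q, ENNReal.ofReal (1 / p * Real.arccos ⟪q.1, q.2⟫ ^ p) ∂γ) ^ (1 / p) ≤
      ENNReal.ofReal δ + (ε : ℝ≥0∞) / (ENNReal.ofReal LQ + 1) := by
    refine (ENNReal.rpow_le_rpow hγlt2.le hip0).trans ?_
    calc (ENNReal.ofReal δ ^ p + c) ^ (1 / p)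
        ≤ (ENNReal.ofReal δ ^ p) ^ (1 / p) + c ^ (1 / p) :=
          ENNReal.rpow_add_le_add_rpow _ _ hip0 hip1
      _ = ENNReal.ofReal δ + (ε : ℝ≥0∞) / (ENNReal.ofReal LQ + 1) := by
          rw [hc, ← ENNReal.rpow_mul, ← ENNReal.rpow_mul, mul_one_div_cancel hp0',
            ENNReal.rpow_one, ENNReal.rpow_one]
  calc ENNReal.ofReal LQ * (ENNReal.ofReal u +
        (∫⁻ q, ENNReal.ofReal (1 / p * Real.arccos ⟪q.1, q.2⟫ ^ p) ∂γ) ^ (1 / p) +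
        ENNReal.ofReal v)
      ≤ ENNReal.ofReal LQ * (ENNReal.ofReal u +
        (ENNReal.ofReal δ + (ε : ℝ≥0∞) / (ENNReal.ofReal LQ + 1)) + ENNReal.ofReal v) :=
        mul_le_mul' le_rfl (add_le_add (add_le_add le_rfl hcost) le_rfl)
    _ = ENNReal.ofReal LQ * (ENNReal.ofReal u + ENNReal.ofReal δ + ENNReal.ofReal v) +
        ENNReal.ofReal LQ * ((ε : ℝ≥0∞) / (ENNReal.ofReal LQ + 1)) := by ring
    _ ≤ ENNReal.ofReal (LQ * (u + δ + v)) + (ε : ℝ≥0∞) := by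
        refine add_le_add (le_of_eq ?_) ?_
        · rw [← ENNReal.ofReal_add hu0 hδ0, ← ENNReal.ofReal_add (add_nonneg hu0 hδ0) hv0,
            ← ENNReal.ofReal_mul hLQ0]
        · calc ENNReal.ofReal LQ * ((ε : ℝ≥0∞) / (ENNReal.ofReal LQ + 1))
              ≤ (ENNReal.ofReal LQ + 1) * ((ε : ℝ≥0∞) / (ENNReal.ofReal LQ + 1)) :=
                mul_le_mul' le_self_add le_rfl
            _ = (ε : ℝ≥0∞) := ENNReal.mul_div_cancel (by simp) hD2
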